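/- Let θ > 0 and c₁, c₂ ≥ 0. There exist constants C > 0 and h₀ ∈ (0,1], depending only on θ, c₁ and c₂, such that for every h ∈ (0, h₀] the following holds: if u, v ∈ ℝ³ satisfy ‖u‖ ≥ θh, and the difference w = v − u satisfies |⟨w, u⟩| / ‖u‖ ≤ c₂ h³ (component along u) and ‖w − (⟨w, u⟩/‖u‖²) u‖ ≤ c₁ h² (component orthogonal to u), then | ‖v‖ − ‖u‖ | ≤ C h³. -/

import Mathlib

open scoped RealInnerProductSpace

private lemma perp_aux {E : Type*} [NormedAddCommGroup E] [InnerProductSpace ℝ E]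
    (w u : E) (hu : ‖u‖ ≠ 0) : ⟪w - (⟪w, u⟫ / ‖u‖ ^ 2) • u, u⟫ = 0 := by
  rw [inner_sub_left, real_inner_smul_left, real_inner_self_eq_norm_sq]
  field_simp
  ring

private lemma pyth_aux {E : Type*} [NormedAddCommGroup E] [InnerProductSpace ℝ E]
    (w u : E) (hu : ‖u‖ ≠ 0) :
    ‖w‖ ^ 2 = ‖w - (⟪w, u⟫ / ‖u‖ ^ 2) • u‖ ^ 2 + (⟪w, u⟫ / ‖u‖) ^ 2 := by
  have hperp : ⟪w - (⟪w, u⟫ / ‖u‖ ^ 2) • u, (⟪w, u⟫ / ‖u‖ ^ 2) • u⟫ = 0 := by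
    rw [real_inner_smul_right, perp_aux w u hu, mul_zero]
  have hsum : w = (w - (⟪w, u⟫ / ‖u‖ ^ 2) • u) + (⟪w, u⟫ / ‖u‖ ^ 2) • u := by abel
  calc ‖w‖ ^ 2
      = ‖(w - (⟪w, u⟫ / ‖u‖ ^ 2) • u) + (⟪w, u⟫ / ‖u‖ ^ 2) • u‖ ^ 2 := by rw [← hsum]
    _ = ‖w - (⟪w, u⟫ / ‖u‖ ^ 2) • u‖ ^ 2 + 2 * ⟪w - (⟪w, u⟫ / ‖u‖ ^ 2) • u, (⟪w, u⟫ / ‖u‖ ^ 2) • u⟫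
        + ‖(⟪w, u⟫ / ‖u‖ ^ 2) • u‖ ^ 2 := norm_add_sq_real _ _
    _ = ‖w - (⟪w, u⟫ / ‖u‖ ^ 2) • u‖ ^ 2 + (⟪w, u⟫ / ‖u‖) ^ 2 := by
        rw [hperp, norm_smul, Real.norm_eq_abs, mul_pow, sq_abs]
        field_simp
        ring

private lemma edge_arith (θ c₁ c₂ h A B a W P : ℝ)
    (hθ : 0 < θ) (hc₁ : 0 ≤ c₁) (hc₂ : 0 ≤ c₂)
    (hh : 0 < h) (hh1 : h ≤ 1) (hA : θ * h ≤ A) (hA0 : 0 < A)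
    (hB : 0 ≤ B) (hP0 : 0 ≤ P)
    (habs : |a| ≤ c₂ * h ^ 3 * A)
    (E1 : B ^ 2 = A ^ 2 + 2 * a + W)
    (E2 : W = P ^ 2 + (a / A) ^ 2)
    (h3 : P ≤ c₁ * h ^ 2) :
    |B - A| ≤ (2 * c₂ + (c₁ ^ 2 + c₂ ^ 2) / θ + 1) * h ^ 3 := by
  have haA : |a / A| ≤ c₂ * h ^ 3 := by
    rw [abs_div, abs_of_pos hA0, div_le_iff₀ hA0]
    exact habs
  have hW : W ≤ (c₁ * h ^ 2) ^ 2 + (c₂ * h ^ 3) ^ 2 := by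
    have e1 : P ^ 2 ≤ (c₁ * h ^ 2) ^ 2 := pow_le_pow_left₀ hP0 h3 2
    have e2 : (a / A) ^ 2 ≤ (c₂ * h ^ 3) ^ 2 := by
      rw [← sq_abs (a / A)]
      exact pow_le_pow_left₀ (abs_nonneg _) haA 2
    linarith [E2.le]
  have hW0 : 0 ≤ W := by rw [E2]; positivity
  have key : |B - A| * A ≤ |B ^ 2 - A ^ 2| := by
    have e : B ^ 2 - A ^ 2 = (B - A) * (B + A) := by ring
    rw [e, abs_mul]
    have hBA : A ≤ |B + A| := by rw [abs_of_nonneg (by linarith)]; linarith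
    exact mul_le_mul_of_nonneg_left hBA (abs_nonneg _)
  have hsq : |B ^ 2 - A ^ 2| ≤ 2 * (c₂ * h ^ 3) * A + (c₁ * h ^ 2) ^ 2 + (c₂ * h ^ 3) ^ 2 := by
    have e : B ^ 2 - A ^ 2 = 2 * a + W := by linarith
    rw [e]
    calc |2 * a + W| ≤ |2 * a| + |W| := abs_add_le _ _
      _ = 2 * |a| + W := by rw [abs_mul, abs_of_nonneg (by norm_num : (0:ℝ) ≤ (2:ℝ)),
            abs_of_nonneg hW0]
      _ ≤ 2 * (c₂ * h ^ 3 * A) + ((c₁ * h ^ 2) ^ 2 + (c₂ * h ^ 3) ^ 2) := by linarith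
      _ = 2 * (c₂ * h ^ 3) * A + (c₁ * h ^ 2) ^ 2 + (c₂ * h ^ 3) ^ 2 := by ring
  have hhA : h ≤ A / θ := by rw [le_div_iff₀ hθ]; linarith
  have e1 : (c₁ * h ^ 2) ^ 2 ≤ (c₁ ^ 2 / θ) * h ^ 3 * A := by
    have step : c₁ ^ 2 * h ^ 3 * h ≤ c₁ ^ 2 * h ^ 3 * (A / θ) := by
      have : (0:ℝ) ≤ c₁ ^ 2 * h ^ 3 := by positivity
      exact mul_le_mul_of_nonneg_left hhA this
    calc (c₁ * h ^ 2) ^ 2 = c₁ ^ 2 * h ^ 3 * h := by ring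
      _ ≤ c₁ ^ 2 * h ^ 3 * (A / θ) := step
      _ = (c₁ ^ 2 / θ) * h ^ 3 * A := by ring
  have hh3le : h ^ 3 ≤ h := by nlinarith
  have e2 : (c₂ * h ^ 3) ^ 2 ≤ (c₂ ^ 2 / θ) * h ^ 3 * A := by
    have step0 : c₂ ^ 2 * h ^ 3 * h ^ 3 ≤ c₂ ^ 2 * h ^ 3 * h := by
      have : (0:ℝ) ≤ c₂ ^ 2 * h ^ 3 := by positivity
      exact mul_le_mul_of_nonneg_left hh3le this
    have step : c₂ ^ 2 * h ^ 3 * h ≤ c₂ ^ 2 * h ^ 3 * (A / θ) := by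
      have : (0:ℝ) ≤ c₂ ^ 2 * h ^ 3 := by positivity
      exact mul_le_mul_of_nonneg_left hhA this
    calc (c₂ * h ^ 3) ^ 2 = c₂ ^ 2 * h ^ 3 * h ^ 3 := by ring
      _ ≤ c₂ ^ 2 * h ^ 3 * h := step0
      _ ≤ c₂ ^ 2 * h ^ 3 * (A / θ) := step
      _ = (c₂ ^ 2 / θ) * h ^ 3 * A := by ring
  have e4 : (0:ℝ) ≤ h ^ 3 * A := by positivity
  have ediff : (2 * c₂ + (c₁ ^ 2 + c₂ ^ 2) / θ + 1) * h ^ 3 * A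
      - (2 * (c₂ * h ^ 3) * A + (c₁ ^ 2 / θ) * h ^ 3 * A + (c₂ ^ 2 / θ) * h ^ 3 * A)
      = h ^ 3 * A := by ring
  have hfinal : |B - A| * A ≤ (2 * c₂ + (c₁ ^ 2 + c₂ ^ 2) / θ + 1) * h ^ 3 * A := by
    linarith
  have := (mul_le_mul_iff_left₀ hA0).mp hfinal
  linarith

/-- Lemma 3.4, first estimate: edge-length supercloseness. -/
theorem edge_length_supercloseness
    (θ c₁ c₂ : ℝ) (hθ : 0 < θ) (hc₁ : 0 ≤ c₁) (hc₂ : 0 ≤ c₂) :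
    ∃ C > (0 : ℝ), ∃ h₀ > (0 : ℝ), h₀ ≤ 1 ∧
      ∀ h : ℝ, 0 < h → h ≤ h₀ →
        ∀ u v : EuclideanSpace ℝ (Fin 3),
          θ * h ≤ ‖u‖ →
          |⟪v - u, u⟫| / ‖u‖ ≤ c₂ * h ^ 3 →
          ‖(v - u) - (⟪v - u, u⟫ / ‖u‖ ^ 2) • u‖ ≤ c₁ * h ^ 2 →
          |‖v‖ - ‖u‖| ≤ C * h ^ 3 := by
  refine ⟨2 * c₂ + (c₁ ^ 2 + c₂ ^ 2) / θ + 1, by positivity, 1, one_pos, le_refl 1, ?_⟩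
  intro h hh hh1 u v hu h2 h3
  have hA : (0:ℝ) < ‖u‖ := lt_of_lt_of_le (by positivity) hu
  have hAne : ‖u‖ ≠ 0 := ne_of_gt hA
  have habs : |⟪v - u, u⟫| ≤ c₂ * h ^ 3 * ‖u‖ := by
    have := (div_le_iff₀ hA).mp h2
    linarith
  have E1 : ‖v‖ ^ 2 = ‖u‖ ^ 2 + 2 * ⟪v - u, u⟫ + ‖v - u‖ ^ 2 := by
    have hv : v = u + (v - u) := by abel
    calc ‖v‖ ^ 2 = ‖u + (v - u)‖ ^ 2 := by rw [← hv]
      _ = ‖u‖ ^ 2 + 2 * ⟪u, v - u⟫ + ‖v - u‖ ^ 2 := norm_add_sq_real u (v - u)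
      _ = ‖u‖ ^ 2 + 2 * ⟪v - u, u⟫ + ‖v - u‖ ^ 2 := by rw [real_inner_comm]
  have E2 := pyth_aux (v - u) u hAne
  exact edge_arith θ c₁ c₂ h ‖u‖ ‖v‖ ⟪v - u, u⟫ (‖v - u‖ ^ 2)
    ‖(v - u) - (⟪v - u, u⟫ / ‖u‖ ^ 2) • u‖ hθ hc₁ hc₂ hh hh1 hu hA (norm_nonneg _)
    (norm_nonneg _) habs E1 E2 h3
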